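/- If two 1-parameter formal deformations g_t = Σ G_i t^i and g_t' = Σ G_i' t^i of a Hom-Novikov superalgebra (A, *, α) are equivalent via a formal isomorphism φ_t = id + Σ_{i≥1} φ_i t^i commuting with α, then G₁ − G₁' = δ¹_hom φ₁; i.e., G₁ and G₁' lie in the same cohomology class in H²_α(A,A). -/

import Mathlib

/-- A 1-parameter formal deformation of a Hom-Novikov superalgebra, given by its
sequence of coefficient bilinear maps. -/
def IsDeformation {𝕜 A : Type*} [Field 𝕜] [AddCommGroup A] [Module 𝕜 A]
    (G : ZMod 2 → Submodule 𝕜 A) (mul : A →ₗ[𝕜] A →ₗ[𝕜] A) (α : A →ₗ[𝕜] A)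
    (Gd : ℕ → A →ₗ[𝕜] A →ₗ[𝕜] A) : Prop :=
  Gd 0 = mul ∧
  (∀ n : ℕ, ∀ i j : ZMod 2, ∀ x ∈ G i, ∀ y ∈ G j, Gd n x y ∈ G (i + j)) ∧
  (∀ n : ℕ, ∀ x y : A, α (Gd n x y) = Gd n (α x) (α y)) ∧
  (∀ n : ℕ, ∀ i j k : ZMod 2, ∀ x ∈ G i, ∀ y ∈ G j, ∀ z ∈ G k,
    ∑ p ∈ Finset.HasAntidiagonal.antidiagonal n,
      (Gd p.1 (α x) (Gd p.2 y z) - Gd p.1 (Gd p.2 x y) (α z)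
        - ((-1 : 𝕜) ^ (i.val * j.val)) •
            (Gd p.1 (α y) (Gd p.2 x z) - Gd p.1 (Gd p.2 y x) (α z))) = 0) ∧
  (∀ n : ℕ, ∀ i j k : ZMod 2, ∀ x ∈ G i, ∀ y ∈ G j, ∀ z ∈ G k,
    ∑ p ∈ Finset.HasAntidiagonal.antidiagonal n,
      (Gd p.1 (Gd p.2 x y) (α z)
        - ((-1 : 𝕜) ^ (j.val * k.val)) • Gd p.1 (Gd p.2 x z) (α y)) = 0)

theorem stmt16
    (𝕜 A : Type*) [Field 𝕜] [AddCommGroup A] [Module 𝕜 A]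
    (G : ZMod 2 → Submodule 𝕜 A) (hG : DirectSum.IsInternal G)
    (mul : A →ₗ[𝕜] A →ₗ[𝕜] A) (α : A →ₗ[𝕜] A)
    (hmul_even : ∀ i j : ZMod 2, ∀ x ∈ G i, ∀ y ∈ G j, mul x y ∈ G (i + j))
    (hα_even : ∀ i : ZMod 2, ∀ x ∈ G i, α x ∈ G i)
    (hα_mul : ∀ x y : A, α (mul x y) = mul (α x) (α y))
    (hls : ∀ i j k : ZMod 2, ∀ x ∈ G i, ∀ y ∈ G j, ∀ z ∈ G k,
      mul (mul x y) (α z) - mul (α x) (mul y z)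
        = ((-1 : 𝕜) ^ (i.val * j.val)) • (mul (mul y x) (α z) - mul (α y) (mul x z)))
    (hrn : ∀ i j k : ZMod 2, ∀ x ∈ G i, ∀ y ∈ G j, ∀ z ∈ G k,
      mul (mul x y) (α z) = ((-1 : 𝕜) ^ (j.val * k.val)) • mul (mul x z) (α y))
    (Gd Gd' : ℕ → A →ₗ[𝕜] A →ₗ[𝕜] A)
    (hGd : IsDeformation G mul α Gd)
    (hGd' : IsDeformation G mul α Gd')
    (φ : ℕ → A →ₗ[𝕜] A)
    (hφ0 : φ 0 = LinearMap.id)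
    (hφα : ∀ n : ℕ, ∀ x : A, φ n (α x) = α (φ n x))
    (hequiv : ∀ n : ℕ, ∀ x y : A,
      ∑ p ∈ Finset.HasAntidiagonal.antidiagonal n, φ p.1 (Gd p.2 x y)
        = ∑ p ∈ Finset.HasAntidiagonal.antidiagonal n,
            ∑ q ∈ Finset.HasAntidiagonal.antidiagonal p.2, Gd' p.1 (φ q.1 x) (φ q.2 y)) :
    ∀ x y : A,
      Gd 1 x y - Gd' 1 x y = mul (φ 1 x) y + mul x (φ 1 y) - φ 1 (mul x y) := by
  intro x y
  have h := hequiv 1 x y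
  have hd : (Finset.HasAntidiagonal.antidiagonal 1 : Finset (ℕ × ℕ)) = {(0,1),(1,0)} := by decide
  have hd0 : (Finset.HasAntidiagonal.antidiagonal 0 : Finset (ℕ × ℕ)) = {(0,0)} := by decide
  rw [hd] at h
  simp only [Finset.sum_pair (show ((0,1):ℕ×ℕ) ≠ (1,0) by decide), Finset.sum_singleton, hd0, hd,
    hφ0, hGd.1, hGd'.1, LinearMap.id_coe, id_eq] at h
  linear_combination (norm := abel) h
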